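/- For each multi-index (s₁,…,s_r) of nonnegative integers, the non-positive multiple polylogarithm Li⁻_{(s₁,…,s_r)}(z) = ∑_{n₁>⋯>n_r>0} n₁^{s₁}⋯n_r^{s_r} z^{n₁} is a rational function lying in ℚ[z, 1/(1-z)]; more precisely it lies in (z/(1-z))·ℚ[z, 1/(1-z)]. -/

import Mathlib

open PowerSeries Finset

/-- Coefficient at `z^n` of the non-positive MPL attached to an index list:
for `s = (s₁,…,s_r)` this is `∑_{n = n₁ > n₂ > ⋯ > n_r > 0} n₁^{s₁}⋯n_r^{s_r}`. -/
def liCoeff : List ℕ → ℕ → ℚ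
  | [], n => if n = 0 then 1 else 0
  | s :: t, n => if n = 0 then 0 else (n : ℚ) ^ s * ∑ m ∈ Finset.range n, liCoeff t m

/-- The non-positive multiple polylogarithm
`Li⁻_{(s₁,…,s_r)}(z) = ∑_{n₁>⋯>n_r>0} n₁^{s₁}⋯n_r^{s_r} z^{n₁} ∈ ℚ⟦z⟧`. -/
noncomputable def Li (s : List ℕ) : PowerSeries ℚ := PowerSeries.mk (liCoeff s)

namespace LiAux

noncomputable abbrev inv1 : PowerSeries ℚ := (1 - PowerSeries.X)⁻¹

lemma const_one_sub : constantCoeff (1 - PowerSeries.X : PowerSeries ℚ) ≠ 0 := by simp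

lemma one_sub_mul_inv : (1 - PowerSeries.X) * inv1 = 1 :=
  PowerSeries.mul_inv_cancel _ const_one_sub

noncomputable abbrev R : Subalgebra ℚ (PowerSeries ℚ) :=
  Algebra.adjoin ℚ ({PowerSeries.X, (1 - PowerSeries.X)⁻¹} : Set (PowerSeries ℚ))

lemma X_mem : (PowerSeries.X : PowerSeries ℚ) ∈ R :=
  Algebra.subset_adjoin (by simp)

lemma inv1_mem : inv1 ∈ R :=
  Algebra.subset_adjoin (by simp)

lemma d_one_sub_inv : derivative ℚ inv1 = inv1 * inv1 := by
  have h := congrArg (derivative ℚ) one_sub_mul_inv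
  rw [Derivation.leibniz, Derivation.map_one_eq_zero] at h
  have h1 : derivative ℚ (1 - PowerSeries.X) = -1 := by
    rw [map_sub, Derivation.map_one_eq_zero, derivative_X, zero_sub]
  rw [h1, smul_eq_mul, smul_eq_mul, mul_neg_one] at h
  have h2 : (1 - PowerSeries.X) * derivative ℚ inv1 = inv1 := by linear_combination h
  calc derivative ℚ inv1 = (inv1 * (1 - PowerSeries.X)) * derivative ℚ inv1 := by
        rw [mul_comm inv1, one_sub_mul_inv, one_mul]
    _ = inv1 * inv1 := by rw [mul_assoc, h2]

lemma d_mem {f : PowerSeries ℚ} (hf : f ∈ R) : derivative ℚ f ∈ R := by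
  induction hf using Algebra.adjoin_induction with
  | mem x hx =>
      rcases hx with h | h
      · rw [h, derivative_X]; exact one_mem R
      · rw [Set.mem_singleton_iff] at h
        rw [h]
        show derivative ℚ inv1 ∈ R
        rw [d_one_sub_inv]; exact mul_mem inv1_mem inv1_mem
  | algebraMap r =>
      have : (algebraMap ℚ (PowerSeries ℚ) r) = PowerSeries.C r := rfl
      rw [this, derivative_C]; exact zero_mem R
  | add x y hx hy ihx ihy => rw [map_add]; exact add_mem ihx ihy
  | mul x y hx hy ihx ihy =>
      rw [Derivation.leibniz, smul_eq_mul, smul_eq_mul]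
      exact add_mem (mul_mem hx ihy) (mul_mem hy ihx)

/-- The property of lying in `(z/(1-z))·R`. -/
def P (f : PowerSeries ℚ) : Prop :=
  ∃ g ∈ R, f = PowerSeries.X * inv1 * g

lemma P.mem {f : PowerSeries ℚ} (hf : P f) : f ∈ R := by
  obtain ⟨g, hg, rfl⟩ := hf
  exact mul_mem (mul_mem X_mem inv1_mem) hg

lemma P_D {f : PowerSeries ℚ} (hf : P f) : P (PowerSeries.X * derivative ℚ f) := by
  obtain ⟨g, hg, rfl⟩ := hf
  refine ⟨g + PowerSeries.X * inv1 * g + PowerSeries.X * derivative ℚ g,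
    add_mem (add_mem hg (mul_mem (mul_mem X_mem inv1_mem) hg)) (mul_mem X_mem (d_mem hg)), ?_⟩
  have h1 : derivative ℚ (PowerSeries.X * inv1 * g)
      = derivative ℚ PowerSeries.X * inv1 * g
        + PowerSeries.X * derivative ℚ inv1 * g
        + PowerSeries.X * inv1 * derivative ℚ g := by
    rw [Derivation.leibniz, Derivation.leibniz (derivative ℚ) PowerSeries.X inv1]
    simp only [smul_eq_mul]; ring
  rw [h1, derivative_X, d_one_sub_inv]
  ring

lemma coeff_X_mul_d (f : PowerSeries ℚ) (n : ℕ) :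
    PowerSeries.coeff n (PowerSeries.X * derivative ℚ f)
      = (n : ℚ) * PowerSeries.coeff n f := by
  cases n with
  | zero => simp
  | succ k =>
      rw [PowerSeries.coeff_succ_X_mul, coeff_derivative]
      push_cast; ring

lemma Li_zero_cons (t : List ℕ) : Li (0 :: t) = PowerSeries.X * inv1 * Li t := by
  have key : (1 - PowerSeries.X) * Li (0 :: t) = PowerSeries.X * Li t := by
    ext n
    rw [sub_mul, one_mul, map_sub]
    cases n with
    | zero => simp [Li, liCoeff]
    | succ k =>
        rw [PowerSeries.coeff_succ_X_mul, PowerSeries.coeff_succ_X_mul, Li, Li,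
          PowerSeries.coeff_mk, PowerSeries.coeff_mk, PowerSeries.coeff_mk]
        show liCoeff (0 :: t) (k + 1) - liCoeff (0 :: t) k = liCoeff t k
        simp only [liCoeff, Nat.succ_ne_zero, if_false, pow_zero, one_mul]
        cases k with
        | zero => simp
        | succ m =>
            rw [if_neg (Nat.succ_ne_zero m), Finset.sum_range_succ]
            ring
  calc Li (0 :: t) = (inv1 * (1 - PowerSeries.X)) * Li (0 :: t) := by
        rw [mul_comm inv1, one_sub_mul_inv, one_mul]
    _ = inv1 * ((1 - PowerSeries.X) * Li (0 :: t)) := by ring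
    _ = inv1 * (PowerSeries.X * Li t) := by rw [key]
    _ = PowerSeries.X * inv1 * Li t := by ring

lemma Li_succ_cons (s : ℕ) (t : List ℕ) :
    Li ((s + 1) :: t) = PowerSeries.X * derivative ℚ (Li (s :: t)) := by
  ext n
  rw [coeff_X_mul_d, Li, Li, PowerSeries.coeff_mk, PowerSeries.coeff_mk]
  show liCoeff ((s + 1) :: t) n = (n : ℚ) * liCoeff (s :: t) n
  cases n with
  | zero => simp [liCoeff]
  | succ k =>
      simp only [liCoeff, Nat.succ_ne_zero, if_false]
      ring

lemma Li_mem (t : List ℕ) : Li t ∈ R ∧ (t ≠ [] → P (Li t)) := by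
  induction t with
  | nil =>
      constructor
      · have : Li [] = 1 := by
          ext n
          rw [Li, PowerSeries.coeff_mk, PowerSeries.coeff_one]
          rfl
        rw [this]; exact one_mem R
      · intro h; exact absurd rfl h
  | cons s t ih =>
      have hP : P (Li (s :: t)) := by
        induction s with
        | zero =>
            rw [Li_zero_cons]
            exact ⟨Li t, ih.1, rfl⟩
        | succ k ihk =>
            rw [Li_succ_cons]
            exact P_D ihk
      exact ⟨hP.mem, fun _ => hP⟩

end LiAux

/-- Any nonempty-index non-positive MPL lies in `(z/(1-z))·ℚ[z, 1/(1-z)]`,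
where `1/(1-z)` is the inverse of `1 - X` in `ℚ⟦X⟧`. -/
theorem Li_mem_rational (s : List ℕ) (hs : s ≠ []) :
    ∃ g ∈ Algebra.adjoin ℚ
        ({PowerSeries.X, (1 - PowerSeries.X)⁻¹} : Set (PowerSeries ℚ)),
      Li s = PowerSeries.X * (1 - PowerSeries.X)⁻¹ * g := by
  exact (LiAux.Li_mem s).2 hs
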